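/- Let X₁ and X₂ be nonnegative, arbitrarily dependent 2-dimensional random vectors such that every 2-dimensional vector formed by taking one component from each of X₁, X₂ (or both from one of them) has distribution in 𝒟₂, and the weak kernels are weakly equivalent. Then the sum X₁ + X₂ (componentwise) has distribution in 𝒟₂: for all t ∈ (0,∞]² \ {(∞,∞)} and b ∈ (0,1)², limsup_{x→∞} P[X₁₁+X₂₁ > b₁t₁x, X₁₂+X₂₂ > b₂t₂x] / P[X₁₁+X₂₁ > t₁x, X₁₂+X₂₂ > t₂x] < ∞. -/

import Mathlib

open Filter MeasureTheory Asymptotics ProbabilityTheory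

noncomputable def rtail {Ω : Type*} [MeasureSpace Ω] (Z : Ω → ℝ) (x : ℝ) : ℝ :=
  (ℙ {ω | x < Z ω}).toReal

def DomVar (T : ℝ → ℝ) : Prop :=
  ∀ b ∈ Set.Ioo (0:ℝ) 1, (fun x => T (b * x)) =O[atTop] T

def WeakEquiv (f g : ℝ → ℝ) : Prop := f =O[atTop] g ∧ g =O[atTop] f

/-- The pair `(U,V)` has a 2-dimensional dominatedly varying distribution (class `𝒟₂`):
there is a weak kernel `F₀ ∈ 𝒟` weakly equivalent to both marginal tails, the marginal
tails are dominatedly varying (dimension reduction), and the joint-tail ratio condition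
holds. -/
def D2 {Ω : Type*} [MeasureSpace Ω] (U V : Ω → ℝ) : Prop :=
  (∃ F0 : ℝ → ℝ, (∀ x, 0 < F0 x) ∧ DomVar F0 ∧
      WeakEquiv (rtail U) F0 ∧ WeakEquiv (rtail V) F0) ∧
  DomVar (rtail U) ∧ DomVar (rtail V) ∧
  ∀ t1 t2 : ℝ, 0 < t1 → 0 < t2 →
    ∀ b1 b2 : ℝ, b1 ∈ Set.Ioo (0:ℝ) 1 → b2 ∈ Set.Ioo (0:ℝ) 1 →
    (fun x => (ℙ {ω | b1 * t1 * x < U ω ∧ b2 * t2 * x < V ω}).toReal) =O[atTop]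
      fun x => (ℙ {ω | t1 * x < U ω ∧ t2 * x < V ω}).toReal

lemma rtail_nonneg' {Ω : Type*} [MeasureSpace Ω] (Z : Ω → ℝ) (x : ℝ) : 0 ≤ rtail Z x :=
  ENNReal.toReal_nonneg

lemma rtail_mono' {Ω : Type*} [MeasureSpace Ω] [IsProbabilityMeasure (ℙ : Measure Ω)]
    (Z W : Ω → ℝ) (h : ∀ ω, Z ω ≤ W ω) (x : ℝ) : rtail Z x ≤ rtail W x :=
  ENNReal.toReal_mono (measure_ne_top _ _)
    (measure_mono fun ω hω => lt_of_lt_of_le hω (h ω))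

lemma rtail_sum_le' {Ω : Type*} [MeasureSpace Ω] [IsProbabilityMeasure (ℙ : Measure Ω)]
    (U V : Ω → ℝ) (x : ℝ) :
    rtail (fun ω => U ω + V ω) x ≤ rtail U (x/2) + rtail V (x/2) := by
  have hsub : {ω | x < U ω + V ω} ⊆ {ω | x/2 < U ω} ∪ {ω | x/2 < V ω} := by
    intro ω hω
    simp only [Set.mem_union, Set.mem_setOf_eq] at *
    by_contra h
    push_neg at h
    linarith [h.1, h.2]
  have h1 : ℙ {ω | x < U ω + V ω} ≤ ℙ {ω | x/2 < U ω} + ℙ {ω | x/2 < V ω} :=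
    (measure_mono hsub).trans (measure_union_le _ _)
  have h2 := ENNReal.toReal_mono (by finiteness) h1
  rwa [ENNReal.toReal_add (measure_ne_top _ _) (measure_ne_top _ _)] at h2

lemma bigO_of_le' {f g : ℝ → ℝ} (hf : ∀ x, 0 ≤ f x) (hle : ∀ x, f x ≤ g x) :
    f =O[atTop] g :=
  isBigO_of_le _ fun x => by
    rw [Real.norm_of_nonneg (hf x), Real.norm_of_nonneg ((hf x).trans (hle x))]
    exact hle x

lemma bigO_of_le_add' {f g1 g2 h : ℝ → ℝ} (hf : ∀ x, 0 ≤ f x)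
    (hle : ∀ x, f x ≤ g1 x + g2 x)
    (h1 : g1 =O[atTop] h) (h2 : g2 =O[atTop] h) : f =O[atTop] h :=
  (bigO_of_le' hf hle).trans (h1.add h2)

lemma bigO_of_le_add4' {f g1 g2 g3 g4 h : ℝ → ℝ} (hf : ∀ x, 0 ≤ f x)
    (hle : ∀ x, f x ≤ g1 x + g2 x + g3 x + g4 x)
    (h1 : g1 =O[atTop] h) (h2 : g2 =O[atTop] h) (h3 : g3 =O[atTop] h) (h4 : g4 =O[atTop] h) :
    f =O[atTop] h :=
  (bigO_of_le' hf hle).trans (((h1.add h2).add h3).add h4)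

lemma half_comp' {T : ℝ → ℝ} (h : DomVar T) : (fun x => T (x/2)) =O[atTop] T := by
  have h2 := h (1/2) ⟨by norm_num, by norm_num⟩
  have e : ∀ x : ℝ, (1:ℝ)/2 * x = x/2 := fun x => by ring
  simpa only [e] using h2

lemma toReal_le_four' {Ω : Type*} [MeasureSpace Ω] [IsProbabilityMeasure (ℙ : Measure Ω)]
    {S A B C D : Set Ω} (h : S ⊆ A ∪ B ∪ C ∪ D) :
    (ℙ S).toReal ≤ (ℙ A).toReal + (ℙ B).toReal + (ℙ C).toReal + (ℙ D).toReal := by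
  have h1 : ℙ S ≤ ℙ A + ℙ B + ℙ C + ℙ D := by
    refine (measure_mono h).trans ?_
    refine (measure_union_le _ _).trans (add_le_add_left ?_ _)
    refine (measure_union_le _ _).trans (add_le_add_left ?_ _)
    exact measure_union_le _ _
  have h2 := ENNReal.toReal_mono (by finiteness) h1
  rwa [ENNReal.toReal_add (by finiteness) (by finiteness),
    ENNReal.toReal_add (by finiteness) (by finiteness),
    ENNReal.toReal_add (by finiteness) (by finiteness)] at h2

/-- closure of `𝒟₂` under componentwise sums of two nonnegative,
arbitrarily dependent random vectors `(X11,X12)` and `(X21,X22)`, assuming every mixed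
pair is in `𝒟₂` and the weak kernels are weakly equivalent. -/
theorem stmt11 {Ω : Type*} [MeasureSpace Ω] [IsProbabilityMeasure (ℙ : Measure Ω)]
    (X11 X12 X21 X22 : Ω → ℝ)
    (h11 : ∀ ω, 0 ≤ X11 ω) (h12 : ∀ ω, 0 ≤ X12 ω)
    (h21 : ∀ ω, 0 ≤ X21 ω) (h22 : ∀ ω, 0 ≤ X22 ω)
    (hD1 : D2 X11 X12) (hD2 : D2 X21 X22)
    (hD3 : D2 X11 X22) (hD4 : D2 X21 X12)
    (hkern : WeakEquiv (rtail X11) (rtail X21)) :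
    D2 (fun ω => X11 ω + X21 ω) (fun ω => X12 ω + X22 ω) := by
  obtain ⟨⟨F0, hF0pos, hF0dv, hF0e11, hF0e12⟩, hdv11, hdv12, hj1⟩ := hD1
  obtain ⟨⟨F0', _, _, hF0'e21, hF0'e22⟩, hdv21, hdv22, hj2⟩ := hD2
  obtain ⟨_, _, _, hj3⟩ := hD3
  obtain ⟨_, _, _, hj4⟩ := hD4
  -- abbreviations
  have hle1 : ∀ ω, X11 ω ≤ X11 ω + X21 ω := fun ω => le_add_of_nonneg_right (h21 ω)
  have hle1' : ∀ ω, X21 ω ≤ X11 ω + X21 ω := fun ω => le_add_of_nonneg_left (h11 ω)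
  have hle2 : ∀ ω, X12 ω ≤ X12 ω + X22 ω := fun ω => le_add_of_nonneg_right (h22 ω)
  have hle2' : ∀ ω, X22 ω ≤ X12 ω + X22 ω := fun ω => le_add_of_nonneg_left (h12 ω)
  -- marginal tails of the sums dominate the individual tails
  have hS1ge : rtail X11 =O[atTop] rtail (fun ω => X11 ω + X21 ω) :=
    bigO_of_le' (rtail_nonneg' _) (rtail_mono' _ _ hle1)
  have hS1ge' : rtail X21 =O[atTop] rtail (fun ω => X11 ω + X21 ω) :=
    bigO_of_le' (rtail_nonneg' _) (rtail_mono' _ _ hle1')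
  have hS2ge : rtail X12 =O[atTop] rtail (fun ω => X12 ω + X22 ω) :=
    bigO_of_le' (rtail_nonneg' _) (rtail_mono' _ _ hle2)
  have hS2ge' : rtail X22 =O[atTop] rtail (fun ω => X12 ω + X22 ω) :=
    bigO_of_le' (rtail_nonneg' _) (rtail_mono' _ _ hle2')
  -- chains to F0
  have h21F0 : rtail X21 =O[atTop] F0 := hkern.2.trans hF0e11.1
  have h22F0 : rtail X22 =O[atTop] F0 :=
    hF0'e22.1.trans (hF0'e21.2.trans h21F0)
  refine ⟨⟨F0, hF0pos, hF0dv, ⟨?_, ?_⟩, ⟨?_, ?_⟩⟩, ?_, ?_, ?_⟩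
  · -- rtail S1 =O F0
    exact bigO_of_le_add' (rtail_nonneg' _) (rtail_sum_le' X11 X21)
      ((half_comp' hdv11).trans hF0e11.1) ((half_comp' hdv21).trans h21F0)
  · -- F0 =O rtail S1
    exact hF0e11.2.trans hS1ge
  · -- rtail S2 =O F0
    exact bigO_of_le_add' (rtail_nonneg' _) (rtail_sum_le' X12 X22)
      ((half_comp' hdv12).trans hF0e12.1) ((half_comp' hdv22).trans h22F0)
  · -- F0 =O rtail S2
    exact hF0e12.2.trans hS2ge
  · -- DomVar of rtail S1
    intro b hb
    have hb2 : b/2 ∈ Set.Ioo (0:ℝ) 1 := ⟨by linarith [hb.1], by linarith [hb.2]⟩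
    have e : ∀ x : ℝ, b * x / 2 = b/2 * x := fun x => by ring
    refine bigO_of_le_add' (fun x => rtail_nonneg' _ _)
      (g1 := fun x => rtail X11 (b/2 * x)) (g2 := fun x => rtail X21 (b/2 * x))
      (fun x => by simpa only [e] using rtail_sum_le' X11 X21 (b * x))
      ((hdv11 (b/2) hb2).trans hS1ge) ((hdv21 (b/2) hb2).trans hS1ge')
  · -- DomVar of rtail S2
    intro b hb
    have hb2 : b/2 ∈ Set.Ioo (0:ℝ) 1 := ⟨by linarith [hb.1], by linarith [hb.2]⟩
    have e : ∀ x : ℝ, b * x / 2 = b/2 * x := fun x => by ring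
    refine bigO_of_le_add' (fun x => rtail_nonneg' _ _)
      (g1 := fun x => rtail X12 (b/2 * x)) (g2 := fun x => rtail X22 (b/2 * x))
      (fun x => by simpa only [e] using rtail_sum_le' X12 X22 (b * x))
      ((hdv12 (b/2) hb2).trans hS2ge) ((hdv22 (b/2) hb2).trans hS2ge')
  · -- joint condition
    intro t1 t2 ht1 ht2 b1 b2 hb1 hb2
    have hb1' : b1/2 ∈ Set.Ioo (0:ℝ) 1 := ⟨by linarith [hb1.1], by linarith [hb1.2]⟩
    have hb2' : b2/2 ∈ Set.Ioo (0:ℝ) 1 := ⟨by linarith [hb2.1], by linarith [hb2.2]⟩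
    -- target lower bound: each pure-pair joint tail is bounded by the sum joint tail
    have htarget : ∀ (U V : Ω → ℝ), (∀ ω, U ω ≤ X11 ω + X21 ω) → (∀ ω, V ω ≤ X12 ω + X22 ω) →
        (fun x => (ℙ {ω | t1 * x < U ω ∧ t2 * x < V ω}).toReal) =O[atTop]
        fun x => (ℙ {ω | t1 * x < X11 ω + X21 ω ∧ t2 * x < X12 ω + X22 ω}).toReal := by
      intro U V hU hV
      refine bigO_of_le' (fun x => ENNReal.toReal_nonneg) (fun x => ?_)
      refine ENNReal.toReal_mono (measure_ne_top _ _) (measure_mono ?_)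
      exact fun ω hω => ⟨hω.1.trans_le (hU ω), hω.2.trans_le (hV ω)⟩
    -- the four dominated pieces
    have H1 := (hj1 t1 t2 ht1 ht2 (b1/2) (b2/2) hb1' hb2').trans
      (htarget X11 X12 hle1 hle2)
    have H2 := (hj3 t1 t2 ht1 ht2 (b1/2) (b2/2) hb1' hb2').trans
      (htarget X11 X22 hle1 hle2')
    have H3 := (hj4 t1 t2 ht1 ht2 (b1/2) (b2/2) hb1' hb2').trans
      (htarget X21 X12 hle1' hle2)
    have H4 := (hj2 t1 t2 ht1 ht2 (b1/2) (b2/2) hb1' hb2').trans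
      (htarget X21 X22 hle1' hle2')
    refine bigO_of_le_add4' (fun x => ENNReal.toReal_nonneg) (fun x => ?_) H1 H2 H3 H4
    refine toReal_le_four' ?_
    intro ω hω
    simp only [Set.mem_setOf_eq] at hω
    have e1 : b1/2 * t1 * x + b1/2 * t1 * x = b1 * t1 * x := by ring
    have e2 : b2/2 * t2 * x + b2/2 * t2 * x = b2 * t2 * x := by ring
    have c1 : b1/2 * t1 * x < X11 ω ∨ b1/2 * t1 * x < X21 ω := by
      by_contra h; push_neg at h; linarith [hω.1, h.1, h.2]
    have c2 : b2/2 * t2 * x < X12 ω ∨ b2/2 * t2 * x < X22 ω := by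
      by_contra h; push_neg at h; linarith [hω.2, h.1, h.2]
    simp only [Set.mem_union, Set.mem_setOf_eq]
    rcases c1 with c1 | c1 <;> rcases c2 with c2 | c2
    · exact Or.inl (Or.inl (Or.inl ⟨c1, c2⟩))
    · exact Or.inl (Or.inl (Or.inr ⟨c1, c2⟩))
    · exact Or.inl (Or.inr ⟨c1, c2⟩)
    · exact Or.inr ⟨c1, c2⟩
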